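/- (Energy in a low-potential region) Let G be a connected weighted graph with vertices s,t, and let p = L_G^+ b_{st} denote the electrical potentials of the unit s-t flow, normalized so that p_t = 0. Let ρ > 0 and let F be the set of edges e = {a,b} with max(p_a, p_b) ≤ ρ. Then the total electrical energy of these edges satisfies sum_{e ∈ F} (b_{st}^T L_G^+ b_e)^2 / r_e ≤ ρ. -/

import Mathlib

open Matrix

/-- The signed indicator vector `χ_x - χ_y`. -/
def incv {V : Type*} [DecidableEq V] (x y : V) : V → ℝ := fun v =>
  (if v = x then 1 else 0) - (if v = y then 1 else 0)

/-- Weighted Laplacian of the multigraph whose edge `e` has endpoints `a e`, `b e`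
and conductance `c e`. -/
noncomputable def lapM {V E : Type*} [DecidableEq V] [Fintype E]
    (a b : E → V) (c : E → ℝ) : Matrix V V ℝ :=
  ∑ e, c e • Matrix.vecMulVec (incv (a e) (b e)) (incv (a e) (b e))

/-- `M` is the Moore–Penrose pseudoinverse of `L`. -/
def IsMPInv {V : Type*} [Fintype V] (L M : Matrix V V ℝ) : Prop :=
  L * M * L = L ∧ M * L * M = M ∧ (L * M)ᵀ = L * M ∧ (M * L)ᵀ = M * L

/-- Connectivity of a weighted graph, encoded as: the kernel of its Laplacian
consists exactly of the constant vectors. -/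
def LapConnected {V : Type*} [Fintype V] (L : Matrix V V ℝ) : Prop :=
  ∀ x : V → ℝ, L.mulVec x = 0 → ∃ t : ℝ, ∀ v, x v = t

lemma incv_dot {V : Type*} [Fintype V] [DecidableEq V] (x y : V) (v : V → ℝ) :
    incv x y ⬝ᵥ v = v x - v y := by
  simp [incv, dotProduct, sub_mul, Finset.sum_sub_distrib]

lemma dot_incv {V : Type*} [Fintype V] [DecidableEq V] (x y : V) (v : V → ℝ) :
    v ⬝ᵥ incv x y = v x - v y := by
  rw [dotProduct_comm, incv_dot]

lemma dot_sum' {V E : Type*} [Fintype V] [Fintype E] (h : V → ℝ) (f : E → V → ℝ) :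
    h ⬝ᵥ (∑ e, f e) = ∑ e, h ⬝ᵥ f e := by
  simp only [dotProduct, Finset.sum_apply, Finset.mul_sum]
  exact Finset.sum_comm

lemma vecMulVec_mulVec' {V : Type*} [Fintype V] (u w x : V → ℝ) :
    (vecMulVec u w).mulVec x = (w ⬝ᵥ x) • u := by
  funext v
  simp only [mulVec, vecMulVec_apply, dotProduct, Pi.smul_apply, smul_eq_mul,
    Finset.sum_mul]
  exact Finset.sum_congr rfl fun i _ => by ring

lemma sum_mulVec' {V E : Type*} [Fintype V] [Fintype E]
    (M : E → Matrix V V ℝ) (x : V → ℝ) :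
    (∑ e, M e).mulVec x = ∑ e, (M e).mulVec x := by
  funext v
  simp only [mulVec, dotProduct, Matrix.sum_apply, Finset.sum_mul,
    Finset.sum_apply]
  exact Finset.sum_comm

lemma lapM_mulVec {V E : Type*} [Fintype V] [DecidableEq V] [Fintype E]
    (a b : E → V) (c : E → ℝ) (x : V → ℝ) :
    (lapM a b c).mulVec x =
      ∑ e, (c e * (incv (a e) (b e) ⬝ᵥ x)) • incv (a e) (b e) := by
  rw [lapM, sum_mulVec']
  refine Finset.sum_congr rfl fun e _ => ?_
  rw [Matrix.smul_mulVec, vecMulVec_mulVec', smul_smul]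

lemma lapM_symm {V E : Type*} [Fintype V] [DecidableEq V] [Fintype E]
    (a b : E → V) (c : E → ℝ) : (lapM a b c)ᵀ = lapM a b c := by
  rw [lapM, Matrix.transpose_sum]
  refine Finset.sum_congr rfl fun e _ => ?_
  rw [Matrix.transpose_smul]
  congr 1
  ext i j
  simp [vecMulVec_apply, mul_comm]

lemma lapM_mulVec_const {V E : Type*} [Fintype V] [DecidableEq V] [Fintype E]
    (a b : E → V) (c : E → ℝ) (k : ℝ) :
    (lapM a b c).mulVec (fun _ => k) = 0 := by
  rw [lapM_mulVec]
  refine Finset.sum_eq_zero fun e _ => ?_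
  rw [incv_dot]
  simp

lemma mpinv_unique {V : Type*} [Fintype V] [DecidableEq V] {L M N : Matrix V V ℝ}
    (hM : IsMPInv L M) (hN : IsMPInv L N) : M = N := by
  obtain ⟨hM1, hM2, hM3, hM4⟩ := hM
  obtain ⟨hN1, hN2, hN3, hN4⟩ := hN
  have h1 : L * M = L * N := by
    calc L * M = (L * M)ᵀ := hM3.symm
    _ = (L * N * L * M)ᵀ := by rw [hN1]
    _ = ((L * N) * (L * M))ᵀ := by simp only [Matrix.mul_assoc]
    _ = (L * M)ᵀ * (L * N)ᵀ := by rw [Matrix.transpose_mul]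
    _ = (L * M) * (L * N) := by rw [hM3, hN3]
    _ = (L * M * L) * N := by simp only [Matrix.mul_assoc]
    _ = L * N := by rw [hM1]
  have h2 : M * L = N * L := by
    calc M * L = (M * L)ᵀ := hM4.symm
    _ = (M * (L * N * L))ᵀ := by rw [hN1]
    _ = ((M * L) * (N * L))ᵀ := by simp only [Matrix.mul_assoc]
    _ = (N * L)ᵀ * (M * L)ᵀ := by rw [Matrix.transpose_mul]
    _ = (N * L) * (M * L) := by rw [hM4, hN4]
    _ = N * (L * M * L) := by simp only [Matrix.mul_assoc]
    _ = N * L := by rw [hM1]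
  calc M = M * L * M := hM2.symm
  _ = N * L * M := by rw [h2]
  _ = N * (L * M) := by rw [Matrix.mul_assoc]
  _ = N * (L * N) := by rw [h1]
  _ = N * L * N := by rw [Matrix.mul_assoc]
  _ = N := hN2

lemma mpinv_symm {V : Type*} [Fintype V] [DecidableEq V] {L M : Matrix V V ℝ}
    (hL : Lᵀ = L) (h : IsMPInv L M) : Mᵀ = M := by
  obtain ⟨h1, h2, h3, h4⟩ := h
  have e1 : (L * M * L)ᵀ = L * (Mᵀ * L) := by
    rw [Matrix.transpose_mul, Matrix.transpose_mul, hL]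
  have e2 : (M * L * M)ᵀ = Mᵀ * (L * Mᵀ) := by
    rw [Matrix.transpose_mul, Matrix.transpose_mul, hL]
  refine mpinv_unique ⟨?_, ?_, ?_, ?_⟩ ⟨h1, h2, h3, h4⟩
  · calc L * Mᵀ * L = L * (Mᵀ * L) := by rw [Matrix.mul_assoc]
    _ = (L * M * L)ᵀ := e1.symm
    _ = Lᵀ := by rw [h1]
    _ = L := hL
  · calc Mᵀ * L * Mᵀ = Mᵀ * (L * Mᵀ) := by rw [Matrix.mul_assoc]
    _ = (M * L * M)ᵀ := e2.symm
    _ = Mᵀ := by rw [h2]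
  · calc (L * Mᵀ)ᵀ = M * Lᵀ := by rw [Matrix.transpose_mul, Matrix.transpose_transpose]
    _ = M * L := by rw [hL]
    _ = (M * L)ᵀ := h4.symm
    _ = Lᵀ * Mᵀ := by rw [Matrix.transpose_mul]
    _ = L * Mᵀ := by rw [hL]
  · calc (Mᵀ * L)ᵀ = Lᵀ * Mᵀᵀ := by rw [Matrix.transpose_mul]
    _ = L * M := by rw [hL, Matrix.transpose_transpose]
    _ = (L * M)ᵀ := h3.symm
    _ = Mᵀ * Lᵀ := by rw [Matrix.transpose_mul]
    _ = Mᵀ * L := by rw [hL]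

lemma clamp_mul_nonneg (x y ρ : ℝ) : 0 ≤ (x - y) * (min x ρ - min y ρ) := by
  rcases le_total x y with hxy | hxy
  · have h1 : min x ρ ≤ min y ρ := min_le_min hxy le_rfl
    nlinarith
  · have h1 : min y ρ ≤ min x ρ := min_le_min hxy le_rfl
    nlinarith

/-- **Energy in a low-potential region.**  If `p` denotes the potentials of the
unit `s`–`t` electrical flow normalized so that `p t = 0`, then the total energy
of the edges whose endpoints both have potential at most `ρ` is at most `ρ`. -/
theorem low_potential_energy_bound
    {V E : Type*} [Fintype V] [DecidableEq V] [Fintype E]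
    (a b : E → V) (r : E → ℝ) (hr : ∀ e, 0 < r e)
    (hconn : LapConnected (lapM a b fun e => (r e)⁻¹))
    (s t : V)
    (Lp : Matrix V V ℝ) (hLp : IsMPInv (lapM a b fun e => (r e)⁻¹) Lp)
    (ρ : ℝ) (hρ : 0 < ρ) :
    ∑ e ∈ Finset.univ.filter (fun e : E =>
        max ((Lp.mulVec (incv s t)) (a e) - (Lp.mulVec (incv s t)) t)
            ((Lp.mulVec (incv s t)) (b e) - (Lp.mulVec (incv s t)) t) ≤ ρ),
      (incv s t ⬝ᵥ Lp.mulVec (incv (a e) (b e)))^2 / r e ≤ ρ := by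
  set L := lapM a b fun e => (r e)⁻¹ with hLdef
  have hLsymm : Lᵀ = L := lapM_symm a b _
  have hLpsymm : Lpᵀ = Lp := mpinv_symm hLsymm hLp
  set p : V → ℝ := Lp.mulVec (incv s t) with hp
  set q : V → ℝ := fun v => p v - p t with hq
  set h : V → ℝ := fun v => min (q v) ρ with hh
  have hQ : L * Lp = Lp * L := by
    calc L * Lp = (L * Lp)ᵀᵀ := by rw [Matrix.transpose_transpose]
    _ = (Lpᵀ * Lᵀ)ᵀ := by rw [Matrix.transpose_mul]
    _ = (Lp * L)ᵀ := by rw [hLsymm, hLpsymm]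
    _ = Lp * L := hLp.2.2.2
  have hL1 : L.mulVec (fun _ => (1:ℝ)) = 0 := lapM_mulVec_const a b _ 1
  have hsumincv : ∑ v, incv s t v = 0 := by
    simp [incv, Finset.sum_sub_distrib]
  -- `L p = incv s t`
  have hLq : L.mulVec p = incv s t := by
    set x : V → ℝ := incv s t - L.mulVec p with hx
    have hLx : L.mulVec x = 0 := by
      rw [hx, Matrix.mulVec_sub, hp, Matrix.mulVec_mulVec, Matrix.mulVec_mulVec,
        Matrix.mul_assoc, hQ, ← Matrix.mul_assoc, hLp.1]
      simp
    obtain ⟨k, hk⟩ := hconn x hLx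
    have h2 : ∑ v, (L.mulVec p) v = 0 := by
      have e1 : L.mulVec p = (Lp * L).mulVec (incv s t) := by
        rw [hp, Matrix.mulVec_mulVec, hQ]
      have e2 : ∑ v, ((Lp * L).mulVec (incv s t)) v
          = (fun _ => (1:ℝ)) ⬝ᵥ (Lp * L).mulVec (incv s t) := by
        simp [dotProduct]
      have e3 : (fun _ => (1:ℝ)) ᵥ* (Lp * L) = 0 := by
        rw [← Matrix.mulVec_transpose, hLp.2.2.2, ← Matrix.mulVec_mulVec, hL1,
          Matrix.mulVec_zero]
      rw [e1, e2, Matrix.dotProduct_mulVec, e3, zero_dotProduct]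
    have hsumx : ∑ v, x v = 0 := by
      rw [hx]
      simp only [Pi.sub_apply, Finset.sum_sub_distrib, hsumincv, h2, sub_zero]
    have hk0 : k = 0 := by
      have hc : (Fintype.card V : ℝ) * k = 0 := by
        rw [← hsumx]
        simp [hk, Finset.sum_const, nsmul_eq_mul, Finset.card_univ]
      have hcard : (0:ℝ) < Fintype.card V := by
        exact_mod_cast Fintype.card_pos_iff.mpr ⟨s⟩
      exact (mul_eq_zero.mp hc).resolve_left (ne_of_gt hcard)
    have hx0 : x = 0 := funext fun v => by rw [hk v, hk0]; rfl
    rw [hx] at hx0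
    exact (sub_eq_zero.mp hx0).symm
  have hLq' : L.mulVec q = incv s t := by
    have hqsub : q = p - (fun _ => p t) := by funext v; simp [hq]
    rw [hqsub, Matrix.mulVec_sub, lapM_mulVec_const a b _ (p t), sub_zero, hLq]
  -- the key summation identity
  have key : h ⬝ᵥ incv s t
      = ∑ e, (r e)⁻¹ * ((q (a e) - q (b e)) * (h (a e) - h (b e))) := by
    rw [← hLq', lapM_mulVec, dot_sum']
    refine Finset.sum_congr rfl fun e _ => ?_
    rw [dotProduct_smul, incv_dot, dot_incv, smul_eq_mul]
    ring
  -- the potential drop on an edge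
  have hdrop : ∀ e, incv s t ⬝ᵥ Lp.mulVec (incv (a e) (b e))
      = q (a e) - q (b e) := by
    intro e
    rw [Matrix.dotProduct_mulVec, ← Matrix.mulVec_transpose, hLpsymm, ← hp,
      dot_incv]
    simp only [hq]
    ring
  -- assemble
  calc ∑ e ∈ Finset.univ.filter (fun e : E =>
        max ((Lp.mulVec (incv s t)) (a e) - (Lp.mulVec (incv s t)) t)
            ((Lp.mulVec (incv s t)) (b e) - (Lp.mulVec (incv s t)) t) ≤ ρ),
      (incv s t ⬝ᵥ Lp.mulVec (incv (a e) (b e)))^2 / r e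
      = ∑ e ∈ Finset.univ.filter (fun e : E =>
        max ((Lp.mulVec (incv s t)) (a e) - (Lp.mulVec (incv s t)) t)
            ((Lp.mulVec (incv s t)) (b e) - (Lp.mulVec (incv s t)) t) ≤ ρ),
      (r e)⁻¹ * ((q (a e) - q (b e)) * (h (a e) - h (b e))) := by
        refine Finset.sum_congr rfl fun e he => ?_
        rw [Finset.mem_filter] at he
        have hmax := he.2
        have hqa : q (a e) ≤ ρ := le_trans (le_max_left _ _) hmax
        have hqb : q (b e) ≤ ρ := le_trans (le_max_right _ _) hmax
        have hha : h (a e) = q (a e) := min_eq_left hqa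
        have hhb : h (b e) = q (b e) := min_eq_left hqb
        rw [hdrop e, hha, hhb]
        field_simp
    _ ≤ ∑ e, (r e)⁻¹ * ((q (a e) - q (b e)) * (h (a e) - h (b e))) := by
        refine Finset.sum_le_sum_of_subset_of_nonneg (Finset.filter_subset _ _)
          fun e _ _ => ?_
        have := clamp_mul_nonneg (q (a e)) (q (b e)) ρ
        have hrnn : 0 ≤ (r e)⁻¹ := le_of_lt (inv_pos.mpr (hr e))
        exact mul_nonneg hrnn (by simpa [hh] using this)
    _ = h ⬝ᵥ incv s t := key.symm
    _ = h s - h t := dot_incv s t h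
    _ ≤ ρ := by
        have hht : h t = 0 := by simp [hh, hq, le_of_lt hρ]
        have hhs : h s ≤ ρ := min_le_right _ _
        linarith
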